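/- Density factorization identity: with Δ = Σ^{1/2} λ / √(1+λᵀλ), Γ = Σ - ΔΔᵀ, μ_b = τ̃ Δ, and τ̃ = τ/√(1+λᵀλ), for all x ∈ ℝ^p, φ₁(τ + λᵀ Σ^{-1/2}(x - μ)) · φ_p(x; μ, Σ) = φ₁(τ; 0, 1 + λᵀλ) · φ_p(x; μ - μ_b, Γ), where φ₁(t; m, v) denotes the univariate normal density with mean m and variance v and φ₁(t) = φ₁(t; 0, 1). -/

import Mathlib

open MeasureTheory Real Matrix Filter

/-- Standard normal cdf Φ. -/
noncomputable def stdCDF (t : ℝ) : ℝ :=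
  ∫ x in Set.Iic t, ProbabilityTheory.gaussianPDFReal 0 1 x

/-- Univariate normal density with mean `m` and variance `v`. -/
noncomputable def normPDF (m v x : ℝ) : ℝ :=
  (Real.sqrt (2 * π * v))⁻¹ * Real.exp (-((x - m) ^ 2 / (2 * v)))

/-- Multivariate normal density with mean `μ` and covariance `S`. -/
noncomputable def mvnPDF {n : Type*} [Fintype n] [DecidableEq n] (μ : n → ℝ) (S : Matrix n n ℝ)
    (x : n → ℝ) : ℝ :=
  (2 * π) ^ (-(Fintype.card n : ℝ) / 2) * S.det ^ (-(1 : ℝ) / 2) *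
    Real.exp (-(dotProduct (x - μ) (S⁻¹ *ᵥ (x - μ))) / 2)

/-- Square root of a positive semidefinite matrix (the old `Matrix.PosSemidef.sqrt`). -/
noncomputable def posSemidefSqrt {n : Type*} [Fintype n] [DecidableEq n] {A : Matrix n n ℝ}
    (hA : A.PosSemidef) : Matrix n n ℝ :=
  (hA.1.eigenvectorUnitary : Matrix n n ℝ) * diagonal ((↑) ∘ Real.sqrt ∘ hA.1.eigenvalues) *
    (star hA.1.eigenvectorUnitary : Matrix n n ℝ)

/-- Extended skew-normal density. -/
noncomputable def esnPDF {n : Type*} [Fintype n] [DecidableEq n] (μ : n → ℝ)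
    (S : Matrix n n ℝ) (hS : S.PosDef) (l : n → ℝ) (τ : ℝ) (y : n → ℝ) : ℝ :=
  (stdCDF (τ / Real.sqrt (1 + dotProduct l l)))⁻¹ * mvnPDF μ S y *
    stdCDF (τ + dotProduct l ((posSemidefSqrt hS.posSemidef)⁻¹ *ᵥ (y - μ)))

lemma myPosSemidefSqrt_mul_self {n : Type*} [Fintype n] [DecidableEq n] {A : Matrix n n ℝ}
    (hA : A.PosSemidef) : posSemidefSqrt hA * posSemidefSqrt hA = A := by
  unfold posSemidefSqrt
  conv_rhs => rw [hA.1.spectral_theorem, Unitary.conjStarAlgAut_apply]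
  have key : (star hA.1.eigenvectorUnitary : Matrix n n ℝ) * hA.1.eigenvectorUnitary = 1 :=
    Unitary.coe_star_mul_self _
  simp only [Matrix.mul_assoc]
  rw [← Matrix.mul_assoc (star _ : Matrix n n ℝ), key, Matrix.one_mul]
  simp only [← Matrix.mul_assoc, diagonal_mul_diagonal]
  congr 3
  funext i
  simp [Real.mul_self_sqrt (hA.eigenvalues_nonneg i)]

lemma myPosSemidefSqrt_transpose {n : Type*} [Fintype n] [DecidableEq n] {A : Matrix n n ℝ}
    (hA : A.PosSemidef) : (posSemidefSqrt hA)ᵀ = posSemidefSqrt hA := by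
  unfold posSemidefSqrt
  rw [← conjTranspose_eq_transpose_of_trivial]
  simp [Matrix.conjTranspose_mul, Matrix.star_eq_conjTranspose, Matrix.mul_assoc]

section aux
variable {n : Type*} [Fintype n] [DecidableEq n]

lemma myVecMulVec_mulVec (a b c : n → ℝ) : Matrix.vecMulVec a b *ᵥ c = (b ⬝ᵥ c) • a := by
  ext i
  simp [Matrix.mulVec, Matrix.vecMulVec_apply, dotProduct, Finset.mul_sum, Finset.sum_mul,
    mul_comm, mul_left_comm]

lemma myMul_vecMulVec (M : Matrix n n ℝ) (a b : n → ℝ) :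
    M * Matrix.vecMulVec a b = Matrix.vecMulVec (M *ᵥ a) b := by
  ext i j
  simp [Matrix.mul_apply, Matrix.vecMulVec_apply, Matrix.mulVec, dotProduct, Finset.sum_mul,
    mul_assoc]

lemma myVecMulVec_mul (a b : n → ℝ) (M : Matrix n n ℝ) :
    Matrix.vecMulVec a b * M = Matrix.vecMulVec a (b ᵥ* M) := by
  ext i j
  simp [Matrix.mul_apply, Matrix.vecMulVec_apply, Matrix.vecMul, dotProduct, Finset.mul_sum,
    mul_assoc]

lemma myVecMulVec_smul_left (r : ℝ) (a b : n → ℝ) :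
    Matrix.vecMulVec (r • a) b = r • Matrix.vecMulVec a b := by
  ext i j
  simp [Matrix.vecMulVec_apply, mul_assoc]

lemma myVecMulVec_smul_right (r : ℝ) (a b : n → ℝ) :
    Matrix.vecMulVec a (r • b) = r • Matrix.vecMulVec a b := by
  ext i j
  simp [Matrix.vecMulVec_apply, mul_left_comm, mul_comm]

lemma myVecMul_vecMulVec (a b c : n → ℝ) : a ᵥ* Matrix.vecMulVec b c = (a ⬝ᵥ b) • c := by
  ext j
  simp [Matrix.vecMul, Matrix.vecMulVec_apply, dotProduct, Finset.sum_mul, Finset.mul_sum,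
    mul_assoc]

lemma my_mul_exp_eq (C1 C2 D1 D2 K a b a' b' : ℝ) (hCD : C1 * D1 = C2 * D2)
    (hab : a + b = a' + b') :
    C1 * Real.exp a * (K * D1 * Real.exp b) = C2 * Real.exp a' * (K * D2 * Real.exp b') := by
  have h1 : C1 * Real.exp a * (K * D1 * Real.exp b) = C1 * D1 * K * Real.exp (a + b) := by
    rw [Real.exp_add]; ring
  have h2 : C2 * Real.exp a' * (K * D2 * Real.exp b') = C2 * D2 * K * Real.exp (a' + b') := by
    rw [Real.exp_add]; ring
  rw [h1, h2, hCD, hab]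

lemma myDet_one_sub_vecMulVec (a b : n → ℝ) :
    (1 - Matrix.vecMulVec a b).det = 1 - b ⬝ᵥ a := by
  have h : (1 : Matrix n n ℝ) - Matrix.vecMulVec a b
      = 1 + Matrix.replicateCol Unit (-a) * Matrix.replicateRow Unit b := by
    rw [Matrix.vecMulVec_eq Unit]
    ext i j
    simp [Matrix.mul_apply, Matrix.replicateCol, Matrix.replicateRow, sub_eq_add_neg]
  rw [h, Matrix.det_one_add_replicateCol_mul_replicateRow]
  simp [sub_eq_add_neg]

end aux

/-- density factorization identity
`φ₁(τ + λᵀΣ^{-1/2}(x-μ)) φ_p(x; μ, Σ) = φ₁(τ; 0, 1+λᵀλ) φ_p(x; μ - μ_b, Γ)`. -/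
theorem esn_density_factorization {p : ℕ} (μ : Fin p → ℝ)
    (S : Matrix (Fin p) (Fin p) ℝ) (hS : S.PosDef) (l : Fin p → ℝ) (τ : ℝ)
    (Δ : Fin p → ℝ)
    (hΔ : Δ = (Real.sqrt (1 + dotProduct l l))⁻¹ • (posSemidefSqrt hS.posSemidef *ᵥ l))
    (x : Fin p → ℝ) :
    normPDF 0 1 (τ + dotProduct l ((posSemidefSqrt hS.posSemidef)⁻¹ *ᵥ (x - μ))) *
        mvnPDF μ S x =
      normPDF 0 (1 + dotProduct l l) τ *
        mvnPDF (μ - (τ / Real.sqrt (1 + dotProduct l l)) • Δ)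
          (S - Matrix.of fun i j => Δ i * Δ j) x := by
  classical
  set A := posSemidefSqrt hS.posSemidef with hAdef
  set t := dotProduct l l with htdef
  set s := Real.sqrt (1 + t) with hsdef
  have hAA : A * A = S := myPosSemidefSqrt_mul_self _
  have hAT : Aᵀ = A := myPosSemidefSqrt_transpose _
  have hdetS : 0 < S.det := hS.det_pos
  have hdetA : A.det ≠ 0 := by
    intro h
    have : A.det * A.det = S.det := by rw [← Matrix.det_mul, hAA]
    rw [h, mul_zero] at this
    exact hdetS.ne' this.symm
  have hUnitA : IsUnit A.det := isUnit_iff_ne_zero.2 hdetA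
  have hUnitS : IsUnit S.det := isUnit_iff_ne_zero.2 hdetS.ne'
  have ht0 : 0 ≤ t := by
    simpa [htdef, dotProduct] using
      Finset.sum_nonneg fun i _ => mul_self_nonneg (l i)
  have hs0 : 0 < s := Real.sqrt_pos.2 (by linarith)
  have hs2 : s ^ 2 = 1 + t := Real.sq_sqrt (by linarith)
  have hAinvT : A⁻¹ᵀ = A⁻¹ := by rw [Matrix.transpose_nonsing_inv, hAT]
  have hAAinv : A * A⁻¹ = 1 := Matrix.mul_nonsing_inv _ hUnitA
  have hAinvA : A⁻¹ * A = 1 := Matrix.nonsing_inv_mul _ hUnitA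
  have hSinv : S⁻¹ = A⁻¹ * A⁻¹ := by rw [← hAA, Matrix.mul_inv_rev]
  have hST : Sᵀ = S := by rw [← hAA, Matrix.transpose_mul, hAT, hAA]
  have hSinvT : S⁻¹ᵀ = S⁻¹ := by rw [Matrix.transpose_nonsing_inv, hST]
  set w : Fin p → ℝ := A⁻¹ *ᵥ l with hwdef
  have hAw : A *ᵥ w = l := by
    rw [hwdef, Matrix.mulVec_mulVec, hAAinv, Matrix.one_mulVec]
  have hwA : w ᵥ* A = l := by rw [← hAT, Matrix.vecMul_transpose, hAw]
  have hSw : S *ᵥ w = s • Δ := by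
    rw [hΔ, smul_smul, mul_inv_cancel₀ hs0.ne', one_smul, ← hAA,
      ← Matrix.mulVec_mulVec, hAw]
  have hΔw : Δ ⬝ᵥ w = s⁻¹ * t := by
    rw [hΔ, smul_dotProduct, smul_eq_mul]
    congr 1
    rw [dotProduct_comm, dotProduct_mulVec, hwA]
  have hwΔ : w ⬝ᵥ Δ = s⁻¹ * t := by rw [dotProduct_comm, hΔw]
  have hSinvΔ : S⁻¹ *ᵥ Δ = s⁻¹ • w := by
    rw [hΔ, Matrix.mulVec_smul, hSinv, Matrix.mulVec_mulVec, Matrix.mul_assoc,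
      hAinvA, Matrix.mul_one]
  have ht' : t = s ^ 2 - 1 := by rw [hs2]; ring
  have hof : (Matrix.of fun i j => Δ i * Δ j) = Matrix.vecMulVec Δ Δ := rfl
  rw [hof]
  set Γ : Matrix (Fin p) (Fin p) ℝ := S - Matrix.vecMulVec Δ Δ with hΓdef
  set M : Matrix (Fin p) (Fin p) ℝ := S⁻¹ + Matrix.vecMulVec w w with hMdef
  have hSSinv : S * S⁻¹ = 1 := Matrix.mul_nonsing_inv _ hUnitS
  have hΔSinv : Δ ᵥ* S⁻¹ = s⁻¹ • w := by
    rw [← hSinvT, Matrix.vecMul_transpose, hSinvΔ]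
  have hc : s⁻¹ + s⁻¹ * t = s := by
    field_simp
    rw [← hs2]
  have hΓM : Γ * M = 1 := by
    rw [hΓdef, hMdef, Matrix.sub_mul, Matrix.mul_add, Matrix.mul_add, hSSinv,
      myMul_vecMulVec, hSw, myVecMulVec_smul_left,
      myVecMulVec_mul _ _ S⁻¹, hΔSinv, myVecMulVec_smul_right,
      myVecMulVec_mul _ _ (Matrix.vecMulVec w w), myVecMul_vecMulVec, hΔw,
      myVecMulVec_smul_right, ← add_smul, hc, add_sub_cancel_right]
  have hΓinv : Γ⁻¹ = M := Matrix.inv_eq_right_inv hΓM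
  have hfac : Γ = S * (1 - Matrix.vecMulVec (s⁻¹ • w) Δ) := by
    rw [Matrix.mul_sub, Matrix.mul_one, myMul_vecMulVec, Matrix.mulVec_smul, hSw,
      smul_smul, inv_mul_cancel₀ hs0.ne', one_smul]
  have hdetΓ : Γ.det = S.det / s ^ 2 := by
    rw [hfac, Matrix.det_mul, myDet_one_sub_vecMulVec, dotProduct_smul, smul_eq_mul, hΔw]
    rw [ht']
    field_simp
    ring
  set d : Fin p → ℝ := x - μ with hddef
  set c : ℝ := w ⬝ᵥ d with hcdef
  set q : ℝ := d ⬝ᵥ (S⁻¹ *ᵥ d) with hqdef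
  have hlc : dotProduct l (A⁻¹ *ᵥ d) = c := by
    rw [dotProduct_mulVec, ← hAinvT, Matrix.vecMul_transpose]
  have hΔSd : Δ ⬝ᵥ (S⁻¹ *ᵥ d) = s⁻¹ * c := by
    rw [dotProduct_mulVec, hΔSinv, smul_dotProduct, smul_eq_mul]
  have hdSΔ : d ⬝ᵥ (S⁻¹ *ᵥ Δ) = s⁻¹ * c := by
    rw [hSinvΔ, dotProduct_smul, smul_eq_mul, dotProduct_comm d w]
  have hΔSΔ : Δ ⬝ᵥ (S⁻¹ *ᵥ Δ) = s⁻¹ * (s⁻¹ * t) := by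
    rw [hSinvΔ, dotProduct_smul, smul_eq_mul, hΔw]
  have hdw : d ⬝ᵥ w = c := dotProduct_comm d w
  have hv : x - (μ - (τ / s) • Δ) = d + (τ / s) • Δ := by
    rw [hddef]; abel
  have hE : (d + (τ / s) • Δ) ⬝ᵥ (M *ᵥ (d + (τ / s) • Δ)) =
      q + 2 * ((τ / s) * (s⁻¹ * c)) + (τ / s) ^ 2 * (s⁻¹ * (s⁻¹ * t)) +
        (c + (τ / s) * (s⁻¹ * t)) ^ 2 := by
    rw [hMdef]
    simp only [Matrix.add_mulVec, myVecMulVec_mulVec, Matrix.mulVec_add, Matrix.mulVec_smul,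
      dotProduct_add, add_dotProduct, dotProduct_smul, smul_dotProduct, smul_eq_mul]
    rw [hΔSd, hdSΔ, hΔSΔ, hdw, hwΔ, hΔw, ← hqdef, ← hcdef]
    ring
  simp only [normPDF, mvnPDF, hΓinv, hdetΓ, ← hddef, hv, hlc, hE, ← hqdef]
  apply my_mul_exp_eq
  · have h1 : Real.sqrt (2 * π * (1 + t)) = Real.sqrt (2 * π * 1) * s := by
      have h : 2 * π * (1 + t) = (2 * π * 1) * s ^ 2 := by rw [← hs2]; ring
      rw [h, Real.sqrt_mul (by positivity), Real.sqrt_sq hs0.le]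
    have h2 : (S.det / s ^ 2) ^ (-(1 : ℝ) / 2) = S.det ^ (-(1 : ℝ) / 2) * s := by
      rw [Real.div_rpow hdetS.le (sq_nonneg s)]
      have h3 : ((s ^ 2 : ℝ)) ^ (-(1 : ℝ) / 2) = s⁻¹ := by
        rw [← Real.rpow_natCast s 2, ← Real.rpow_mul hs0.le]
        norm_num [Real.rpow_neg_one]
      rw [h3, div_eq_mul_inv, inv_inv]
    rw [h1, h2, mul_inv]
    have hsq : Real.sqrt (2 * π * 1) ≠ 0 := by positivity
    field_simp
  · rw [ht']
    have hτ : τ - 0 = τ := by ring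
    field_simp
    ring
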